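/- (Carleman's inequality.) For every sequence (a_n)_{n≥1} of non-negative real numbers with ∑_{n=1}^∞ a_n convergent, one has ∑_{n=1}^∞ (∏_{k=1}^n a_k)^{1/n} ≤ e · ∑_{n=1}^∞ a_n. -/

import Mathlib

open Finset

/-- The Carleman weights `c k = (k+1)^k / k^(k-1)`. -/
noncomputable def carC (k : ℕ) : ℝ := ((k : ℝ) + 1) ^ k / (k : ℝ) ^ (k - 1)

lemma carC_pos {k : ℕ} (hk : 1 ≤ k) : 0 < carC k := by
  have hk0 : (0 : ℝ) < k := by exact_mod_cast hk
  exact div_pos (pow_pos (by linarith) _) (pow_pos hk0 _)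

lemma prod_carC : ∀ n : ℕ, 1 ≤ n → ∏ k ∈ Icc 1 n, carC k = ((n : ℝ) + 1) ^ n := by
  intro n hn
  induction n, hn using Nat.le_induction with
  | base => simp [carC]
  | succ m hm ih =>
    rw [Finset.prod_Icc_succ_top (by omega), ih]
    have hm0 : (0 : ℝ) < m := by exact_mod_cast hm
    have : carC (m + 1) = ((m : ℝ) + 2) ^ (m + 1) / ((m : ℝ) + 1) ^ m := by
      simp [carC]
      push_cast
      ring_nf
    rw [this]
    have h1 : ((m : ℝ) + 1) ^ m ≠ 0 := by positivity
    field_simp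
    push_cast
    ring

lemma carC_le {k : ℕ} (hk : 1 ≤ k) : carC k ≤ (k : ℝ) * Real.exp 1 := by
  have hk0 : (0 : ℝ) < k := by exact_mod_cast hk
  have h1 : ((k : ℝ) + 1) ^ k ≤ (k : ℝ) ^ k * Real.exp 1 := by
    have h2 : (k : ℝ) + 1 = (k : ℝ) * (1 + 1 / k) := by field_simp
    have h3 : (1 : ℝ) + 1 / k ≤ Real.exp (1 / k) := by
      have := Real.add_one_le_exp (1 / (k : ℝ)); linarith
    have h4 : ((1 : ℝ) + 1 / k) ^ k ≤ Real.exp (1 / k) ^ k := by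
      apply pow_le_pow_left₀ (by positivity) h3
    have h5 : Real.exp (1 / (k : ℝ)) ^ k = Real.exp 1 := by
      rw [← Real.exp_nat_mul]
      congr 1
      field_simp
    calc ((k : ℝ) + 1) ^ k = (k : ℝ) ^ k * ((1 : ℝ) + 1 / k) ^ k := by
          rw [h2, mul_pow]
      _ ≤ (k : ℝ) ^ k * Real.exp 1 := by
          rw [← h5]; exact mul_le_mul_of_nonneg_left h4 (by positivity)
  have hkk : (k : ℝ) ^ k = (k : ℝ) ^ (k - 1) * k := by
    nth_rewrite 2 [show k = (k - 1) + 1 by omega]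
    rw [pow_succ]
  rw [carC, div_le_iff₀ (by positivity)]
  calc ((k : ℝ) + 1) ^ k ≤ (k : ℝ) ^ k * Real.exp 1 := h1
    _ = (k : ℝ) * Real.exp 1 * (k : ℝ) ^ (k - 1) := by rw [hkk]; ring

lemma gm_step (a : ℕ → ℝ) (ha : ∀ n ≥ 1, 0 ≤ a n) {n : ℕ} (hn : 1 ≤ n) :
    (∏ k ∈ Icc 1 n, a k) ^ ((1 : ℝ) / n) ≤
      (1 / ((n : ℝ) * (n + 1))) * ∑ k ∈ Icc 1 n, carC k * a k := by
  have hn0 : (0 : ℝ) < n := by exact_mod_cast hn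
  have hz : ∀ k ∈ Icc 1 n, 0 ≤ carC k * a k := fun k hk =>
    mul_nonneg (carC_pos (mem_Icc.mp hk).1).le (ha k (mem_Icc.mp hk).1)
  have hcard : (Icc 1 n).card = n := by simp
  have hgm := Real.geom_mean_le_arith_mean_weighted (Icc 1 n) (fun _ => 1 / (n : ℝ))
    (fun k => carC k * a k) (fun i _ => by positivity)
    (by rw [Finset.sum_const, hcard, nsmul_eq_mul]; field_simp) hz
  have hprodz : ∏ k ∈ Icc 1 n, (carC k * a k) ^ ((1 : ℝ) / n) =
      ((n : ℝ) + 1) * (∏ k ∈ Icc 1 n, a k) ^ ((1 : ℝ) / n) := by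
    rw [Real.finset_prod_rpow _ _ hz, Finset.prod_mul_distrib, prod_carC n hn,
      Real.mul_rpow (by positivity) (Finset.prod_nonneg fun k hk => ha k (mem_Icc.mp hk).1),
      ← Real.rpow_natCast ((n : ℝ) + 1) n, ← Real.rpow_mul (by positivity)]
    congr 2
    field_simp
    simp
  have hsumw : ∑ k ∈ Icc 1 n, (1 / (n : ℝ)) * (carC k * a k) =
      (1 / (n : ℝ)) * ∑ k ∈ Icc 1 n, carC k * a k := by rw [Finset.mul_sum]
  rw [hprodz, hsumw] at hgm
  rw [div_mul_eq_mul_div, one_mul, le_div_iff₀ (by positivity)]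
  calc (∏ k ∈ Icc 1 n, a k) ^ ((1 : ℝ) / n) * ((n : ℝ) * (n + 1))
      = (((n : ℝ) + 1) * (∏ k ∈ Icc 1 n, a k) ^ ((1 : ℝ) / n)) * n := by ring
    _ ≤ ((1 / (n : ℝ)) * ∑ k ∈ Icc 1 n, carC k * a k) * n :=
        mul_le_mul_of_nonneg_right hgm hn0.le
    _ = ∑ k ∈ Icc 1 n, carC k * a k := by field_simp

lemma tele_eq {k : ℕ} (hk : 1 ≤ k) : ∀ m : ℕ, k ≤ m →
    ∑ n ∈ Ico k m, (1 : ℝ) / ((n : ℝ) * (n + 1)) = 1 / k - 1 / m := by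
  intro m hm
  induction m, hm using Nat.le_induction with
  | base => simp
  | succ m hm ih =>
    rw [Finset.sum_Ico_succ_top hm, ih]
    have hm0 : (0 : ℝ) < m := by
      have : 1 ≤ m := le_trans hk hm
      exact_mod_cast this
    have h1 : (m : ℝ) + 1 ≠ 0 := by positivity
    push_cast
    field_simp
    ring

lemma tele_le {k : ℕ} (hk : 1 ≤ k) (m : ℕ) :
    ∑ n ∈ Ico k m, (1 : ℝ) / ((n : ℝ) * (n + 1)) ≤ 1 / k := by
  rcases le_or_gt k m with h | h
  · rw [tele_eq hk m h]
    have hm0 : (0 : ℝ) ≤ m := by positivity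
    have : (0:ℝ) ≤ 1 / (m : ℝ) := by positivity
    linarith
  · rw [Finset.Ico_eq_empty (by omega)]
    simp

lemma carleman_finite (a : ℕ → ℝ) (ha : ∀ n ≥ 1, 0 ≤ a n) (N : ℕ) :
    ∑ n ∈ Icc 1 N, (∏ k ∈ Icc 1 n, a k) ^ ((1 : ℝ) / n) ≤
      Real.exp 1 * ∑ k ∈ Icc 1 N, a k := by
  have step1 : ∑ n ∈ Icc 1 N, (∏ k ∈ Icc 1 n, a k) ^ ((1 : ℝ) / n) ≤
      ∑ n ∈ Icc 1 N, ∑ k ∈ Icc 1 n, (1 / ((n : ℝ) * (n + 1))) * (carC k * a k) := by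
    apply Finset.sum_le_sum
    intro n hn
    rw [← Finset.mul_sum]
    exact gm_step a ha (mem_Icc.mp hn).1
  have step2 : ∑ n ∈ Icc 1 N, ∑ k ∈ Icc 1 n, (1 / ((n : ℝ) * (n + 1))) * (carC k * a k) =
      ∑ k ∈ Icc 1 N, ∑ n ∈ Ico k (N + 1), (1 / ((n : ℝ) * (n + 1))) * (carC k * a k) := by
    have h := Finset.sum_Ico_Ico_comm 1 (N + 1)
      (fun k n => (1 / ((n : ℝ) * (n + 1))) * (carC k * a k))
    have e1 : ∀ n : ℕ, Icc 1 n = Ico 1 (n + 1) := fun n => (Finset.Ico_add_one_right_eq_Icc 1 n).symm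
    rw [e1]
    simp_rw [e1]
    rw [← h]
  have step3 : ∀ k ∈ Icc 1 N,
      ∑ n ∈ Ico k (N + 1), (1 / ((n : ℝ) * (n + 1))) * (carC k * a k) ≤ Real.exp 1 * a k := by
    intro k hk
    obtain ⟨hk1, _⟩ := mem_Icc.mp hk
    have hk0 : (0 : ℝ) < k := by exact_mod_cast hk1
    have hak : 0 ≤ a k := ha k hk1
    have hca : 0 ≤ carC k * a k := mul_nonneg (carC_pos hk1).le hak
    calc ∑ n ∈ Ico k (N + 1), (1 / ((n : ℝ) * (n + 1))) * (carC k * a k)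
        = (∑ n ∈ Ico k (N + 1), (1 : ℝ) / ((n : ℝ) * (n + 1))) * (carC k * a k) := by
          rw [Finset.sum_mul]
      _ ≤ (1 / (k : ℝ)) * (carC k * a k) :=
          mul_le_mul_of_nonneg_right (tele_le hk1 (N + 1)) hca
      _ ≤ (1 / (k : ℝ)) * (((k : ℝ) * Real.exp 1) * a k) := by
          apply mul_le_mul_of_nonneg_left _ (by positivity)
          exact mul_le_mul_of_nonneg_right (carC_le hk1) hak
      _ = Real.exp 1 * a k := by field_simp
  calc ∑ n ∈ Icc 1 N, (∏ k ∈ Icc 1 n, a k) ^ ((1 : ℝ) / n)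
      ≤ ∑ k ∈ Icc 1 N, ∑ n ∈ Ico k (N + 1), (1 / ((n : ℝ) * (n + 1))) * (carC k * a k) := by
        rw [← step2]; exact step1
    _ ≤ ∑ k ∈ Icc 1 N, Real.exp 1 * a k := Finset.sum_le_sum step3
    _ = Real.exp 1 * ∑ k ∈ Icc 1 N, a k := by rw [← Finset.mul_sum]

/-- Carleman's inequality: `∑ (a_1 ⋯ a_n)^{1/n} ≤ e ∑ a_n`. -/
theorem carleman_inequality
    (a : ℕ → ℝ) (ha : ∀ n ≥ 1, 0 ≤ a n) (hsum : Summable (fun n : ℕ => a (n + 1))) :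
    ∑' n : ℕ, (∏ k ∈ Finset.Icc 1 (n + 1), a k) ^ ((1 : ℝ) / (n + 1)) ≤
      Real.exp 1 * ∑' n : ℕ, a (n + 1) := by
  have hf : ∀ n : ℕ, 0 ≤ (∏ k ∈ Finset.Icc 1 (n + 1), a k) ^ ((1 : ℝ) / (n + 1)) := by
    intro n
    apply Real.rpow_nonneg
    exact Finset.prod_nonneg fun k hk => ha k (mem_Icc.mp hk).1
  apply Real.tsum_le_of_sum_range_le hf
  intro N
  have hre : ∑ i ∈ range N, (∏ k ∈ Finset.Icc 1 (i + 1), a k) ^ ((1 : ℝ) / (i + 1)) =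
      ∑ n ∈ Icc 1 N, (∏ k ∈ Icc 1 n, a k) ^ ((1 : ℝ) / n) := by
    rw [show Icc 1 N = Ico 1 (N + 1) by rw [Finset.Ico_add_one_right_eq_Icc],
      Finset.sum_Ico_eq_sum_range]
    simp [add_comm]
  have hre2 : ∑ k ∈ Icc 1 N, a k = ∑ i ∈ range N, a (i + 1) := by
    rw [show Icc 1 N = Ico 1 (N + 1) by rw [Finset.Ico_add_one_right_eq_Icc],
      Finset.sum_Ico_eq_sum_range]
    simp [add_comm]
  rw [hre]
  calc ∑ n ∈ Icc 1 N, (∏ k ∈ Icc 1 n, a k) ^ ((1 : ℝ) / n)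
      ≤ Real.exp 1 * ∑ k ∈ Icc 1 N, a k := carleman_finite a ha N
    _ ≤ Real.exp 1 * ∑' n : ℕ, a (n + 1) := by
        apply mul_le_mul_of_nonneg_left _ (Real.exp_pos 1).le
        rw [hre2]
        exact Summable.sum_le_tsum (range N) (fun i _ => ha (i + 1) (by omega)) hsum
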